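/- Let C = (c_{i,j}) and D = (d_{i,j}) be n×n matrices of nonnegative integers having equal row sums (∑_j c_{i,j} = ∑_j d_{i,j} for every i) and equal column sums (∑_i c_{i,j} = ∑_i d_{i,j} for every j). Then the inequality ∏_{i,j} a_{i,j}^{c_{i,j}} ≥ ∏_{i,j} a_{i,j}^{d_{i,j}} holds for every totally nonnegative n×n real matrix A = (a_{i,j}) if and only if C* ≥ D* in the componentwise order (c*_{i,j} ≥ d*_{i,j} for all i, j). -/

import Mathlib

open Matrix BigOperators

/-- An `n × n` real matrix is totally nonnegative if all its minors are nonnegative. -/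
def TotallyNonneg {n : ℕ} (A : Matrix (Fin n) (Fin n) ℝ) : Prop :=
  ∀ (k : ℕ) (f g : Fin k → Fin n), StrictMono f → StrictMono g →
    0 ≤ (A.submatrix f g).det

/-- `cstar C i j = ∑_{a ≤ i, b ≤ j} C a b`. -/
def cstar {n : ℕ} (C : Matrix (Fin n) (Fin n) ℕ) (i j : Fin n) : ℕ :=
  ∑ a ∈ Finset.Iic i, ∑ b ∈ Finset.Iic j, C a b

namespace TNAux

open Finset


/-- prefix sums: `SS C i j = ∑_{a<i,b<j} C a b` -/
def SS (C : ℕ → ℕ → ℕ) (i j : ℕ) : ℕ := ∑ a ∈ range i, ∑ b ∈ range j, C a b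

/-- the monomial -/
def PP (n : ℕ) (A : ℕ → ℕ → ℝ) (C : ℕ → ℕ → ℕ) : ℝ :=
  ∏ s ∈ range n, ∏ t ∈ range n, A s t ^ C s t

/-- single cell matrix -/
def cell (x y : ℕ) : ℕ → ℕ → ℕ := fun s t => if s = x ∧ t = y then 1 else 0

lemma SS_succ_left (C : ℕ → ℕ → ℕ) (i j : ℕ) :
    SS C (i+1) j = SS C i j + ∑ b ∈ range j, C i b := by
  simp [SS, Finset.sum_range_succ]

lemma SS_split_left (C : ℕ → ℕ → ℕ) {i i' : ℕ} (h : i ≤ i') (j : ℕ) :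
    SS C i' j = SS C i j + ∑ a ∈ Ico i i', ∑ b ∈ range j, C a b := by
  unfold SS
  simp only [range_eq_Ico]
  rw [← Finset.sum_Ico_consecutive _ (Nat.zero_le i) h]

lemma PP_add (n : ℕ) (A : ℕ → ℕ → ℝ) (F G : ℕ → ℕ → ℕ) :
    PP n A (fun s t => F s t + G s t) = PP n A F * PP n A G := by
  simp [PP, pow_add, Finset.prod_mul_distrib]

lemma PP_nonneg (n : ℕ) (A : ℕ → ℕ → ℝ) (h0 : ∀ s t, s < n → t < n → 0 ≤ A s t)
    (F : ℕ → ℕ → ℕ) : 0 ≤ PP n A F := by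
  apply Finset.prod_nonneg
  intro s hs
  exact Finset.prod_nonneg fun t ht =>
    pow_nonneg (h0 s t (mem_range.mp hs) (mem_range.mp ht)) _

lemma PP_eq_zero {n : ℕ} {A : ℕ → ℕ → ℝ} {F : ℕ → ℕ → ℕ} {x y : ℕ}
    (hx : x < n) (hy : y < n) (hA : A x y = 0) (hF : 1 ≤ F x y) : PP n A F = 0 := by
  apply Finset.prod_eq_zero (mem_range.mpr hx)
  apply Finset.prod_eq_zero (mem_range.mpr hy)
  rw [hA]
  exact zero_pow (by omega)

lemma cell_eq (x y s t : ℕ) :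
    cell x y s t = if s = x then (if t = y then 1 else 0) else 0 := by
  unfold cell; by_cases h1 : s = x <;> by_cases h2 : t = y <;> simp [h1, h2]

lemma PP_cell {n : ℕ} (A : ℕ → ℕ → ℝ) {x y : ℕ} (hx : x < n) (hy : y < n) :
    PP n A (cell x y) = A x y := by
  unfold PP
  have h1 : ∀ s t : ℕ, A s t ^ cell x y s t = if s = x then (if t = y then A s t else 1) else 1 := by
    intro s t
    rw [cell_eq]
    by_cases h1 : s = x <;> by_cases h2 : t = y <;> simp [h1, h2]
  simp only [h1]
  rw [Finset.prod_eq_single_of_mem x (mem_range.mpr hx)]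
  · simp only [if_pos rfl]
    rw [Finset.prod_eq_single_of_mem y (mem_range.mpr hy)]
    · simp
    · intro t _ ht; simp [ht]
  · intro s _ hs
    simp [hs]

lemma row_cell {n : ℕ} (x y : ℕ) (hy : y < n) (s : ℕ) :
    ∑ t ∈ range n, cell x y s t = if s = x then 1 else 0 := by
  simp only [cell_eq]
  by_cases h : s = x
  · simp [h, Finset.sum_ite_eq', hy]
  · simp [h]

lemma col_cell {n : ℕ} (x y : ℕ) (hx : x < n) (t : ℕ) :
    ∑ s ∈ range n, cell x y s t = if t = y then 1 else 0 := by
  simp only [cell_eq]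
  by_cases h : t = y
  · simp [h, Finset.sum_ite_eq', hx]
  · simp [h]

lemma SS_cell (x y i j : ℕ) :
    SS (cell x y) i j = if x < i ∧ y < j then 1 else 0 := by
  unfold SS
  simp only [cell_eq]
  by_cases hx : x < i
  · rw [Finset.sum_eq_single_of_mem x (mem_range.mpr hx)]
    · by_cases hy : y < j <;> simp [Finset.sum_ite_eq', hy, hx]
    · intro s _ hs; simp [hs]
  · have : ∀ a ∈ range i, (∑ b ∈ range j, if a = x then (if b = y then 1 else 0) else 0) = 0 := by
      intro a ha
      have : a ≠ x := by have := mem_range.mp ha; omega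
      simp [this]
    rw [Finset.sum_congr rfl this]
    simp [hx]

lemma SS_add (F G : ℕ → ℕ → ℕ) (i j : ℕ) :
    SS (fun s t => F s t + G s t) i j = SS F i j + SS G i j := by
  unfold SS
  rw [← Finset.sum_add_distrib]
  exact Finset.sum_congr rfl fun a _ => by rw [← Finset.sum_add_distrib]


lemma eq_of_SS_eq {n : ℕ} {C D : ℕ → ℕ → ℕ}
    (h : ∀ i ≤ n, ∀ j ≤ n, SS C i j = SS D i j) :
    ∀ s < n, ∀ t < n, C s t = D s t := by
  intro s hs t ht
  have hrowpre : ∀ j ≤ n, ∑ b ∈ range j, C s b = ∑ b ∈ range j, D s b := by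
    intro j hj
    have h1 := h s (by omega) j hj
    have h2 := h (s+1) (by omega) j hj
    rw [SS_succ_left, SS_succ_left, h1] at h2
    omega
  have e1 := hrowpre t (by omega)
  have e2 := hrowpre (t+1) (by omega)
  rw [Finset.sum_range_succ, Finset.sum_range_succ, e1] at e2
  omega

lemma step {n : ℕ} {A : ℕ → ℕ → ℝ} {C D : ℕ → ℕ → ℕ}
    (h0 : ∀ s t, s < n → t < n → 0 ≤ A s t)
    (h2 : ∀ a a' b b', a < a' → a' < n → b < b' → b' < n →
      A a b' * A a' b ≤ A a b * A a' b')
    (hrow : ∀ s < n, ∑ t ∈ range n, C s t = ∑ t ∈ range n, D s t)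
    (hcol : ∀ t < n, ∑ s ∈ range n, C s t = ∑ s ∈ range n, D s t)
    (hdom : ∀ i ≤ n, ∀ j ≤ n, SS D i j ≤ SS C i j)
    (hne : ∃ s, s < n ∧ ∃ t, t < n ∧ C s t ≠ D s t) :
    ∃ D' : ℕ → ℕ → ℕ,
      (∀ s < n, ∑ t ∈ range n, C s t = ∑ t ∈ range n, D' s t) ∧
      (∀ t < n, ∑ s ∈ range n, C s t = ∑ s ∈ range n, D' s t) ∧
      (∀ i ≤ n, ∀ j ≤ n, SS D' i j ≤ SS C i j) ∧
      (∀ i j, SS D i j ≤ SS D' i j) ∧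
      (∃ i, i ≤ n ∧ ∃ j, j ≤ n ∧ SS D i j < SS D' i j) ∧
      PP n A D ≤ PP n A D' := by
  classical
  -- lexicographically minimal difference
  have hPu : ∃ s, s < n ∧ ∃ t, t < n ∧ C s t ≠ D s t := hne
  set u := Nat.find hPu with hu
  obtain ⟨hun, t₀, ht₀n, ht₀⟩ := Nat.find_spec hPu
  have hlex_row : ∀ s < u, ∀ t < n, C s t = D s t := by
    intro s hs t ht
    have hmin := Nat.find_min hPu hs
    push_neg at hmin
    exact hmin (by omega) t ht
  have hPv : ∃ t, C u t ≠ D u t := ⟨t₀, ht₀⟩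
  set v := Nat.find hPv with hv
  have hvspec : C u v ≠ D u v := Nat.find_spec hPv
  have hvn : v < n := by
    have : v ≤ t₀ := Nat.find_min' hPv ht₀
    omega
  have hlex_col : ∀ t < v, C u t = D u t := by
    intro t ht
    have := Nat.find_min hPv ht
    simpa using this
  -- D u v < C u v
  have huv : D u v < C u v := by
    have hd := hdom (u+1) (by omega) (v+1) (by omega)
    rw [SS_succ_left, SS_succ_left] at hd
    have e0 : SS C u (v+1) = SS D u (v+1) := by
      apply Finset.sum_congr rfl
      intro a ha
      apply Finset.sum_congr rfl
      intro t ht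
      exact hlex_row a (mem_range.mp ha) t (by have := mem_range.mp ht; omega)
    rw [Finset.sum_range_succ, Finset.sum_range_succ] at hd
    have e1 : ∑ t ∈ range v, C u t = ∑ t ∈ range v, D u t :=
      Finset.sum_congr rfl fun t ht => hlex_col t (mem_range.mp ht)
    omega
  -- existence of b'
  have hb'ex : ∃ q, (v < q ∧ q < n) ∧ 1 ≤ D u q := by
    by_contra hcon
    push_neg at hcon
    have hz : ∀ q ∈ Ico (v+1) n, D u q = 0 := by
      intro q hq
      have := mem_Ico.mp hq
      have := hcon q ⟨by omega, by omega⟩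
      omega
    have hsplitD : ∑ t ∈ range (v+1), D u t + ∑ t ∈ Ico (v+1) n, D u t
        = ∑ t ∈ range n, D u t := by
      simp only [range_eq_Ico]
      exact Finset.sum_Ico_consecutive _ (by omega) (by omega)
    have hzero : ∑ t ∈ Ico (v+1) n, D u t = 0 := Finset.sum_eq_zero hz
    have hCle2 : ∑ t ∈ range (v+1), C u t ≤ ∑ t ∈ range n, C u t :=
      Finset.sum_le_sum_of_subset (Finset.range_subset_range.mpr (by omega))
    have e1 : ∑ t ∈ range v, C u t = ∑ t ∈ range v, D u t :=
      Finset.sum_congr rfl fun t ht => hlex_col t (mem_range.mp ht)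
    have hC : ∑ t ∈ range (v+1), D u t < ∑ t ∈ range (v+1), C u t := by
      rw [Finset.sum_range_succ, Finset.sum_range_succ]
      omega
    have := hrow u hun
    omega
  set b' := Nat.find hb'ex with hb'
  obtain ⟨⟨hvb', hb'n⟩, hDub'⟩ : (v < b' ∧ b' < n) ∧ 1 ≤ D u b' := Nat.find_spec hb'ex
  have hb'min : ∀ t, v < t → t < b' → D u t = 0 := by
    intro t h1 h2
    have := Nat.find_min hb'ex h2
    push_neg at this
    rcases Nat.lt_or_ge t n with h | h
    · have := this ⟨h1, h⟩; omega
    · omega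
  -- existence of a'
  have ha'ex : ∃ p, (u < p ∧ p < n) ∧ ∃ t, (v ≤ t ∧ t < b') ∧ 1 ≤ D p t := by
    have hcolv : ∃ p, (u < p ∧ p < n) ∧ 1 ≤ D p v := by
      by_contra hcon
      push_neg at hcon
      have hz : ∀ s ∈ Ico (u+1) n, D s v = 0 := by
        intro s hs
        have := mem_Ico.mp hs
        have := hcon s ⟨by omega, by omega⟩
        omega
      have hsplitD : ∑ s ∈ range (u+1), D s v + ∑ s ∈ Ico (u+1) n, D s v
          = ∑ s ∈ range n, D s v := by
        simp only [range_eq_Ico]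
        exact Finset.sum_Ico_consecutive _ (by omega) (by omega)
      have hzero : ∑ s ∈ Ico (u+1) n, D s v = 0 := Finset.sum_eq_zero hz
      have hCle : ∑ s ∈ range (u+1), C s v ≤ ∑ s ∈ range n, C s v :=
        Finset.sum_le_sum_of_subset (Finset.range_subset_range.mpr (by omega))
      have e1 : ∑ s ∈ range u, C s v = ∑ s ∈ range u, D s v :=
        Finset.sum_congr rfl fun s hs => hlex_row s (mem_range.mp hs) v hvn
      have hC : ∑ s ∈ range (u+1), D s v < ∑ s ∈ range (u+1), C s v := by
        rw [Finset.sum_range_succ, Finset.sum_range_succ]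
        omega
      have := hcol v hvn
      omega
    obtain ⟨p, hp1, hp2⟩ := hcolv
    exact ⟨p, hp1, v, ⟨le_refl v, hvb'⟩, hp2⟩
  set a' := Nat.find ha'ex with ha'
  obtain ⟨⟨hua', ha'n⟩, b, ⟨hvb, hbb'⟩, hDa'b⟩ :
      (u < a' ∧ a' < n) ∧ ∃ t, (v ≤ t ∧ t < b') ∧ 1 ≤ D a' t := Nat.find_spec ha'ex
  have ha'min : ∀ s, u < s → s < a' → ∀ t, v ≤ t → t < b' → D s t = 0 := by
    intro s h1 h2 t h3 h4
    have := Nat.find_min ha'ex h2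
    push_neg at this
    have := this ⟨h1, by omega⟩ t ⟨h3, h4⟩
    omega
  have hbn : b < n := by omega
  -- key claim
  have hkey : ∀ i j, u < i → i ≤ a' → v < j → j ≤ b' → SS D i j + 1 ≤ SS C i j := by
    intro i j hui hia hvj hjb
    obtain ⟨p, rfl⟩ : ∃ p, i = p + 1 := ⟨i - 1, by omega⟩
    obtain ⟨q, rfl⟩ : ∃ q, j = q + 1 := ⟨j - 1, by omega⟩
    have hsplit : ∀ X : ℕ → ℕ → ℕ, SS X (p+1) (q+1) =
        SS X u (q+1) + (∑ t ∈ range (q+1), X u t)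
          + ∑ a ∈ Ico (u+1) (p+1), ∑ t ∈ range (q+1), X a t := by
      intro X
      rw [SS_split_left X (show u + 1 ≤ p + 1 by omega), SS_succ_left]
    rw [hsplit C, hsplit D]
    -- piece 1
    have e1 : SS C u (q+1) = SS D u (q+1) := by
      apply Finset.sum_congr rfl
      intro a ha
      apply Finset.sum_congr rfl
      intro t ht
      exact hlex_row a (mem_range.mp ha) t (by have := mem_range.mp ht; omega)
    -- piece 2
    have e2 : ∑ t ∈ range (q+1), D u t + 1 ≤ ∑ t ∈ range (q+1), C u t := by
      have hsplitD : ∑ t ∈ range (v+1), D u t + ∑ t ∈ Ico (v+1) (q+1), D u t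
          = ∑ t ∈ range (q+1), D u t := by
        simp only [range_eq_Ico]
        exact Finset.sum_Ico_consecutive _ (by omega) (by omega)
      have hzero : ∑ t ∈ Ico (v+1) (q+1), D u t = 0 :=
        Finset.sum_eq_zero fun t ht => by
          have := mem_Ico.mp ht
          exact hb'min t (by omega) (by omega)
      have e1' : ∑ t ∈ range v, C u t = ∑ t ∈ range v, D u t :=
        Finset.sum_congr rfl fun t ht => hlex_col t (mem_range.mp ht)
      have hCle : ∑ t ∈ range (v+1), C u t ≤ ∑ t ∈ range (q+1), C u t :=
        Finset.sum_le_sum_of_subset (Finset.range_subset_range.mpr (by omega))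
      rw [Finset.sum_range_succ (f := fun t => C u t)] at hCle
      rw [Finset.sum_range_succ (f := fun t => D u t)] at hsplitD
      omega
    -- piece 3
    have e3 : ∑ a ∈ Ico (u+1) (p+1), ∑ t ∈ range (q+1), D a t
        ≤ ∑ a ∈ Ico (u+1) (p+1), ∑ t ∈ range (q+1), C a t := by
      have hrowzero : ∀ a ∈ Ico (u+1) (p+1),
          ∑ t ∈ range (q+1), D a t = ∑ t ∈ range v, D a t := by
        intro a ha
        have hamem := mem_Ico.mp ha
        have hsplitD : ∑ t ∈ range v, D a t + ∑ t ∈ Ico v (q+1), D a t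
            = ∑ t ∈ range (q+1), D a t := by
          simp only [range_eq_Ico]
          exact Finset.sum_Ico_consecutive _ (by omega) (by omega)
        have hzero : ∑ t ∈ Ico v (q+1), D a t = 0 :=
          Finset.sum_eq_zero fun t ht => by
            have := mem_Ico.mp ht
            exact ha'min a (by omega) (by omega) t (by omega) (by omega)
        omega
      rw [Finset.sum_congr rfl hrowzero]
      have hTD : SS D (p+1) v = SS D (u+1) v + ∑ a ∈ Ico (u+1) (p+1), ∑ t ∈ range v, D a t :=
        SS_split_left D (by omega) v
      have hTC : SS C (p+1) v = SS C (u+1) v + ∑ a ∈ Ico (u+1) (p+1), ∑ t ∈ range v, C a t :=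
        SS_split_left C (by omega) v
      have hEq : SS D (u+1) v = SS C (u+1) v := by
        rw [SS_succ_left, SS_succ_left]
        have e4 : SS C u v = SS D u v := by
          apply Finset.sum_congr rfl
          intro a ha
          apply Finset.sum_congr rfl
          intro t ht
          exact hlex_row a (mem_range.mp ha) t (by have := mem_range.mp ht; omega)
        have e5 : ∑ t ∈ range v, C u t = ∑ t ∈ range v, D u t :=
          Finset.sum_congr rfl fun t ht => hlex_col t (mem_range.mp ht)
        omega
      have hdompv := hdom (p+1) (by omega) v (by omega)
      have hColsub : ∑ a ∈ Ico (u+1) (p+1), ∑ t ∈ range v, C a t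
          ≤ ∑ a ∈ Ico (u+1) (p+1), ∑ t ∈ range (q+1), C a t :=
        Finset.sum_le_sum fun a _ =>
          Finset.sum_le_sum_of_subset (Finset.range_subset_range.mpr (by omega))
      omega
    omega
  -- the swap move
  have hub' : u ≠ a' := by omega
  have hbb'' : b ≠ b' := by omega
  set D' : ℕ → ℕ → ℕ := fun s t =>
    if s = u ∧ t = b then D s t + 1
    else if s = u ∧ t = b' then D s t - 1
    else if s = a' ∧ t = b then D s t - 1
    else if s = a' ∧ t = b' then D s t + 1
    else D s t with hD'def
  have hptwise : ∀ s t, D s t + (cell u b s t + cell a' b' s t)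
      = D' s t + (cell u b' s t + cell a' b s t) := by
    intro s t
    rcases eq_or_ne s u with rfl | hsu
    · rcases eq_or_ne t b with rfl | htb
      · simp [hD'def, cell, hub', hbb'', Ne.symm hub', Ne.symm hbb'']
      · rcases eq_or_ne t b' with rfl | htb2
        · simp only [hD'def, cell]
          simp [hub', hbb'', Ne.symm hub', Ne.symm hbb'']
          omega
        · simp [hD'def, cell, htb, htb2]
    · rcases eq_or_ne s a' with rfl | hsa
      · rcases eq_or_ne t b with rfl | htb
        · simp only [hD'def, cell]
          simp [hub', hbb'', Ne.symm hub', Ne.symm hbb'']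
          omega
        · rcases eq_or_ne t b' with rfl | htb2
          · simp [hD'def, cell, hub', hbb'', Ne.symm hub', Ne.symm hbb'']
          · simp [hD'def, cell, htb, htb2, hsu]
      · simp [hD'def, cell, hsu, hsa]
  have hfun : (fun s t => D s t + (cell u b s t + cell a' b' s t))
      = fun s t => D' s t + (cell u b' s t + cell a' b s t) :=
    funext fun s => funext fun t => hptwise s t
  -- prefix sum relation
  have hSS' : ∀ i j, SS D' i j = SS D i j +
      (if u < i ∧ i ≤ a' ∧ b < j ∧ j ≤ b' then 1 else 0) := by
    intro i j
    have h1 : SS (fun s t => D s t + (cell u b s t + cell a' b' s t)) i j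
        = SS (fun s t => D' s t + (cell u b' s t + cell a' b s t)) i j := by
      rw [hfun]
    rw [SS_add D (fun s t => cell u b s t + cell a' b' s t),
        SS_add D' (fun s t => cell u b' s t + cell a' b s t),
        SS_add (cell u b) (cell a' b'), SS_add (cell u b') (cell a' b),
        SS_cell, SS_cell, SS_cell, SS_cell] at h1
    split_ifs at h1 ⊢ <;> omega
  -- row margins
  have hrow' : ∀ s < n, ∑ t ∈ range n, C s t = ∑ t ∈ range n, D' s t := by
    intro s hs
    have h1 : ∑ t ∈ range n, (D s t + (cell u b s t + cell a' b' s t))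
        = ∑ t ∈ range n, (D' s t + (cell u b' s t + cell a' b s t)) :=
      Finset.sum_congr rfl fun t _ => hptwise s t
    rw [Finset.sum_add_distrib, Finset.sum_add_distrib,
        Finset.sum_add_distrib, Finset.sum_add_distrib,
        row_cell u b hbn, row_cell a' b' hb'n, row_cell u b' hb'n, row_cell a' b hbn] at h1
    have := hrow s hs
    split_ifs at h1 <;> omega
  -- column margins
  have hcol' : ∀ t < n, ∑ s ∈ range n, C s t = ∑ s ∈ range n, D' s t := by
    intro t ht
    have h1 : ∑ s ∈ range n, (D s t + (cell u b s t + cell a' b' s t))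
        = ∑ s ∈ range n, (D' s t + (cell u b' s t + cell a' b s t)) :=
      Finset.sum_congr rfl fun s _ => hptwise s t
    rw [Finset.sum_add_distrib, Finset.sum_add_distrib,
        Finset.sum_add_distrib, Finset.sum_add_distrib,
        col_cell u b hun, col_cell a' b' ha'n, col_cell u b' hun, col_cell a' b ha'n] at h1
    have := hcol t ht
    split_ifs at h1 <;> omega
  -- dominance
  have hdom' : ∀ i ≤ n, ∀ j ≤ n, SS D' i j ≤ SS C i j := by
    intro i hi j hj
    rw [hSS' i j]
    split_ifs with h
    · exact hkey i j h.1 h.2.1 (by omega) h.2.2.2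
    · exact hdom i hi j hj
  -- monotone
  have hmono : ∀ i j, SS D i j ≤ SS D' i j := by
    intro i j
    rw [hSS' i j]
    split_ifs <;> omega
  -- strict increase
  have hstrict : ∃ i, i ≤ n ∧ ∃ j, j ≤ n ∧ SS D i j < SS D' i j := by
    refine ⟨u + 1, by omega, b + 1, by omega, ?_⟩
    rw [hSS' (u+1) (b+1)]
    split_ifs with h
    · omega
    · exact absurd ⟨by omega, by omega, by omega, by omega⟩ h
  -- the product inequality
  have hPPeq : PP n A D * (A u b * A a' b') = PP n A D' * (A u b' * A a' b) := by
    have h1 : PP n A (fun s t => D s t + (cell u b s t + cell a' b' s t))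
        = PP n A (fun s t => D' s t + (cell u b' s t + cell a' b s t)) := by
      rw [hfun]
    rw [PP_add n A D (fun s t => cell u b s t + cell a' b' s t),
        PP_add n A D' (fun s t => cell u b' s t + cell a' b s t),
        PP_add n A (cell u b) (cell a' b'), PP_add n A (cell u b') (cell a' b),
        PP_cell A hun hbn, PP_cell A ha'n hb'n, PP_cell A hun hb'n, PP_cell A ha'n hbn] at h1
    exact h1
  have hPP : PP n A D ≤ PP n A D' := by
    by_cases hz : A u b' = 0 ∨ A a' b = 0
    · have hPD : PP n A D = 0 := by
        rcases hz with hz | hz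
        · exact PP_eq_zero hun hb'n hz hDub'
        · exact PP_eq_zero ha'n hbn hz hDa'b
      rw [hPD]
      exact PP_nonneg n A h0 D'
    · push_neg at hz
      have hx : 0 < A u b' := lt_of_le_of_ne (h0 u b' hun hb'n) (Ne.symm hz.1)
      have hy : 0 < A a' b := lt_of_le_of_ne (h0 a' b ha'n hbn) (Ne.symm hz.2)
      have hXpos : 0 < A u b' * A a' b := mul_pos hx hy
      have hXY : A u b' * A a' b ≤ A u b * A a' b' :=
        h2 u a' b b' hua' ha'n hbb' hb'n
      have hPD : 0 ≤ PP n A D := PP_nonneg n A h0 D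
      have hmul : PP n A D * (A u b' * A a' b) ≤ PP n A D' * (A u b' * A a' b) := by
        calc PP n A D * (A u b' * A a' b) ≤ PP n A D * (A u b * A a' b') :=
              mul_le_mul_of_nonneg_left hXY hPD
          _ = PP n A D' * (A u b' * A a' b) := hPPeq
      exact le_of_mul_le_mul_right hmul hXpos
  exact ⟨D', hrow', hcol', hdom', hmono, hstrict, hPP⟩

def gap (n : ℕ) (C D : ℕ → ℕ → ℕ) : ℕ :=
  ∑ p ∈ (range (n+1)) ×ˢ (range (n+1)), (SS C p.1 p.2 - SS D p.1 p.2)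

lemma natmain {n : ℕ} {A : ℕ → ℕ → ℝ} {C : ℕ → ℕ → ℕ}
    (h0 : ∀ s t, s < n → t < n → 0 ≤ A s t)
    (h2 : ∀ a a' b b', a < a' → a' < n → b < b' → b' < n →
      A a b' * A a' b ≤ A a b * A a' b') :
    ∀ (N : ℕ) (D : ℕ → ℕ → ℕ),
      (∀ s < n, ∑ t ∈ range n, C s t = ∑ t ∈ range n, D s t) →
      (∀ t < n, ∑ s ∈ range n, C s t = ∑ s ∈ range n, D s t) →
      (∀ i ≤ n, ∀ j ≤ n, SS D i j ≤ SS C i j) →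
      gap n C D ≤ N → PP n A D ≤ PP n A C := by
  intro N
  induction N with
  | zero =>
    intro D hrow hcol hdom hgap
    by_cases hCD : ∀ s, s < n → ∀ t, t < n → C s t = D s t
    · exact le_of_eq (Finset.prod_congr rfl fun s hs => Finset.prod_congr rfl fun t ht => by
        rw [hCD s (mem_range.mp hs) t (mem_range.mp ht)])
    · exfalso
      push_neg at hCD
      obtain ⟨s, hs, t, ht, hne⟩ := hCD
      obtain ⟨D', _, _, hdom', hmono, ⟨i, hi, j, hj, hstrict⟩, _⟩ :=
        step h0 h2 hrow hcol hdom ⟨s, hs, t, ht, hne⟩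
      have : SS D i j < SS C i j := lt_of_lt_of_le hstrict (hdom' i hi j hj)
      have hterm : 1 ≤ SS C i j - SS D i j := by omega
      have hmem : (i, j) ∈ (range (n+1)) ×ˢ (range (n+1)) := by
        rw [Finset.mem_product]
        constructor <;> (rw [mem_range]; omega)
      have : 1 ≤ gap n C D := le_trans hterm (Finset.single_le_sum
        (f := fun p : ℕ × ℕ => SS C p.1 p.2 - SS D p.1 p.2) (fun _ _ => Nat.zero_le _) hmem)
      omega
  | succ N ih =>
    intro D hrow hcol hdom hgap
    by_cases hCD : ∀ s, s < n → ∀ t, t < n → C s t = D s t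
    · exact le_of_eq (Finset.prod_congr rfl fun s hs => Finset.prod_congr rfl fun t ht => by
        rw [hCD s (mem_range.mp hs) t (mem_range.mp ht)])
    · push_neg at hCD
      obtain ⟨s, hs, t, ht, hne⟩ := hCD
      obtain ⟨D', hrow', hcol', hdom', hmono, ⟨i, hi, j, hj, hstrict⟩, hPP⟩ :=
        step h0 h2 hrow hcol hdom ⟨s, hs, t, ht, hne⟩
      have hlt : gap n C D' < gap n C D := by
        apply Finset.sum_lt_sum
        · intro p _
          have := hmono p.1 p.2
          omega
        · refine ⟨(i, j), ?_, ?_⟩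
          · rw [Finset.mem_product]
            constructor <;> (rw [mem_range]; omega)
          · show SS C i j - SS D' i j < SS C i j - SS D i j
            have h1 : SS D' i j ≤ SS C i j := hdom' i hi j hj
            have h2 : SS D i j < SS D' i j := hstrict
            omega
      exact le_trans hPP (ih D' hrow' hcol' hdom' (by omega))


lemma fin_Iic_sum {n : ℕ} (i : Fin n) (g : Fin n → ℕ) (g' : ℕ → ℕ)
    (h : ∀ a : Fin n, g a = g' ↑a) :
    ∑ a ∈ Finset.Iic i, g a = ∑ s ∈ range ((i : ℕ) + 1), g' s := by
  have h1 : Finset.Iic i = Finset.univ.filter (fun a : Fin n => (a : ℕ) ≤ (i : ℕ)) := by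
    ext a
    simp only [Finset.mem_Iic, Finset.mem_filter, Finset.mem_univ, true_and, Fin.le_def]
  rw [h1, Finset.sum_filter]
  have h2 : ∀ a : Fin n, (if (a : ℕ) ≤ (i : ℕ) then g a else 0)
      = (fun s => if s ≤ (i : ℕ) then g' s else 0) (a : ℕ) := fun a => by
    simp only [h a]
  rw [Finset.sum_congr rfl fun a _ => h2 a,
    Fin.sum_univ_eq_sum_range (fun s => if s ≤ (i : ℕ) then g' s else 0) n,
    ← Finset.sum_filter]
  congr 1
  ext s
  simp only [Finset.mem_filter, mem_range, Nat.lt_succ_iff]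
  have := i.isLt
  omega

/-- conversion of cstar to SS of the extended matrix -/
lemma cstar_eq_SS {n : ℕ} (X : Matrix (Fin n) (Fin n) ℕ) (i j : Fin n) :
    cstar X i j = SS (fun s t => if h : s < n ∧ t < n then X ⟨s, h.1⟩ ⟨t, h.2⟩ else 0)
      ((i : ℕ) + 1) ((j : ℕ) + 1) := by
  unfold cstar SS
  apply fin_Iic_sum i _ _ ?_
  intro a
  apply fin_Iic_sum j _ _ ?_
  intro b
  have ha : (a : ℕ) < n := a.isLt
  have hb : (b : ℕ) < n := b.isLt
  simp [ha, hb]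

lemma fin_prod_eq_PP {n : ℕ} (A : Matrix (Fin n) (Fin n) ℝ) (X : Matrix (Fin n) (Fin n) ℕ) :
    (∏ i, ∏ j, A i j ^ X i j) =
      PP n (fun s t => if h : s < n ∧ t < n then A ⟨s, h.1⟩ ⟨t, h.2⟩ else 0)
        (fun s t => if h : s < n ∧ t < n then X ⟨s, h.1⟩ ⟨t, h.2⟩ else 0) := by
  unfold PP
  rw [← Fin.prod_univ_eq_prod_range (fun s => ∏ t ∈ range n,
    (if h : s < n ∧ t < n then A ⟨s, h.1⟩ ⟨t, h.2⟩ else 0) ^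
    (if h : s < n ∧ t < n then X ⟨s, h.1⟩ ⟨t, h.2⟩ else 0)) n]
  apply Finset.prod_congr rfl
  intro i _
  rw [← Fin.prod_univ_eq_prod_range (fun t =>
    (if h : (i : ℕ) < n ∧ t < n then A ⟨(i : ℕ), h.1⟩ ⟨t, h.2⟩ else 0) ^
    (if h : (i : ℕ) < n ∧ t < n then X ⟨(i : ℕ), h.1⟩ ⟨t, h.2⟩ else 0)) n]
  apply Finset.prod_congr rfl
  intro j _
  have hi : (i : ℕ) < n := i.isLt
  have hj : (j : ℕ) < n := j.isLt
  simp [hi, hj]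

lemma fin_row_sum {n : ℕ} (X : Matrix (Fin n) (Fin n) ℕ) (i : Fin n) :
    (∑ j, X i j) = ∑ t ∈ range n,
      (fun s t => if h : s < n ∧ t < n then X ⟨s, h.1⟩ ⟨t, h.2⟩ else 0) (i : ℕ) t := by
  rw [← Fin.sum_univ_eq_sum_range]
  apply Finset.sum_congr rfl
  intro j _
  have hi : (i : ℕ) < n := i.isLt
  have hj : (j : ℕ) < n := j.isLt
  simp [hi, hj]

lemma fin_col_sum {n : ℕ} (X : Matrix (Fin n) (Fin n) ℕ) (j : Fin n) :
    (∑ i, X i j) = ∑ s ∈ range n,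
      (fun s t => if h : s < n ∧ t < n then X ⟨s, h.1⟩ ⟨t, h.2⟩ else 0) s (j : ℕ) := by
  rw [← Fin.sum_univ_eq_sum_range]
  apply Finset.sum_congr rfl
  intro i _
  have hi : (i : ℕ) < n := i.isLt
  have hj : (j : ℕ) < n := j.isLt
  simp [hi, hj]


/-- the test matrix for the forward direction -/
lemma test_TN {n : ℕ} (i j : Fin n) :
    TotallyNonneg (fun a b => if a ≤ i ∧ b ≤ j then (2:ℝ) else 1) := by
  intro k f g hf hg
  match k with
  | 0 => simp [Matrix.det_fin_zero]
  | 1 =>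
    rw [Matrix.det_fin_one]
    simp only [Matrix.submatrix, Matrix.of_apply]
    split_ifs <;> norm_num
  | 2 =>
    rw [Matrix.det_fin_two]
    simp only [Matrix.submatrix, Matrix.of_apply]
    have hf01 : f 0 ≤ f 1 := (hf (show (0 : Fin 2) < 1 by decide)).le
    have hg01 : g 0 ≤ g 1 := (hg (show (0 : Fin 2) < 1 by decide)).le
    by_cases h2 : f 1 ≤ i
    · have h1 : f 0 ≤ i := le_trans hf01 h2
      by_cases h4 : g 1 ≤ j
      · have h3 : g 0 ≤ j := le_trans hg01 h4
        simp [h1, h2, h3, h4]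
      · by_cases h3 : g 0 ≤ j <;> simp [h1, h2, h3, h4] <;> norm_num
    · by_cases h1 : f 0 ≤ i
      · by_cases h4 : g 1 ≤ j
        · have h3 : g 0 ≤ j := le_trans hg01 h4
          simp [h1, h2, h3, h4]
        · by_cases h3 : g 0 ≤ j <;> simp [h1, h2, h3, h4] <;> norm_num
      · simp [h1, h2]
  | (k + 3) =>
    have hcard : Fintype.card Bool < Fintype.card (Fin (k + 3)) := by
      simp [Fintype.card_bool]
    obtain ⟨r, r', hrr', heq⟩ :=
      Fintype.exists_ne_map_eq_of_card_lt (fun r : Fin (k+3) => decide (f r ≤ i)) hcard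
    have hiff : f r ≤ i ↔ f r' ≤ i := by
      simpa [decide_eq_decide] using heq
    have hroweq : (Matrix.submatrix (fun a b => if a ≤ i ∧ b ≤ j then (2:ℝ) else 1) f g) r
        = (Matrix.submatrix (fun a b => if a ≤ i ∧ b ≤ j then (2:ℝ) else 1) f g) r' := by
      funext c
      simp only [Matrix.submatrix, Matrix.of_apply]
      by_cases h : f r ≤ i
      · have h' : f r' ≤ i := hiff.mp h
        simp [h, h']
      · have h' : ¬ f r' ≤ i := fun hh => h (hiff.mpr hh)
        simp [h, h']
    rw [Matrix.det_zero_of_row_eq hrr' hroweq]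

lemma prod_test {n : ℕ} (i j : Fin n) (X : Matrix (Fin n) (Fin n) ℕ) :
    (∏ a, ∏ b, (if a ≤ i ∧ b ≤ j then (2:ℝ) else 1) ^ X a b) = 2 ^ cstar X i j := by
  have h1 : ∀ a b : Fin n, (if a ≤ i ∧ b ≤ j then (2:ℝ) else 1) ^ X a b
      = 2 ^ (if a ≤ i ∧ b ≤ j then X a b else 0) := by
    intro a b
    split_ifs <;> simp
  simp only [h1]
  rw [Finset.prod_congr rfl (fun a (_ : a ∈ Finset.univ) =>
    Finset.prod_pow_eq_pow_sum Finset.univ _ (2:ℝ)), Finset.prod_pow_eq_pow_sum]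
  congr 1
  unfold cstar
  have hIic : ∀ (x : Fin n), Finset.Iic x = Finset.univ.filter (fun a => a ≤ x) := by
    intro x
    ext a
    simp
  rw [hIic i, Finset.sum_filter]
  apply Finset.sum_congr rfl
  intro a _
  by_cases ha : a ≤ i
  · simp only [ha, true_and, if_true]
    rw [hIic j, Finset.sum_filter]
  · simp [ha]

lemma forward {n : ℕ} (C D : Matrix (Fin n) (Fin n) ℕ)
    (h : ∀ A : Matrix (Fin n) (Fin n) ℝ, TotallyNonneg A →
      (∏ i, ∏ j, A i j ^ D i j) ≤ ∏ i, ∏ j, A i j ^ C i j) :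
    ∀ i j, cstar D i j ≤ cstar C i j := by
  intro i j
  have h2 := h (fun a b => if a ≤ i ∧ b ≤ j then (2:ℝ) else 1) (test_TN i j)
  rw [prod_test, prod_test] at h2
  exact (pow_le_pow_iff_right₀ (by norm_num : (1:ℝ) < 2)).mp h2


lemma backward {n : ℕ} (C D : Matrix (Fin n) (Fin n) ℕ)
    (hrow : ∀ i, ∑ j, C i j = ∑ j, D i j)
    (hcol : ∀ j, ∑ i, C i j = ∑ i, D i j)
    (hcs : ∀ i j, cstar D i j ≤ cstar C i j)
    (A : Matrix (Fin n) (Fin n) ℝ) (hA : TotallyNonneg A) :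
    (∏ i, ∏ j, A i j ^ D i j) ≤ ∏ i, ∏ j, A i j ^ C i j := by
  set A' : ℕ → ℕ → ℝ := fun s t => if h : s < n ∧ t < n then A ⟨s, h.1⟩ ⟨t, h.2⟩ else 0
    with hA'def
  set C' : ℕ → ℕ → ℕ := fun s t => if h : s < n ∧ t < n then C ⟨s, h.1⟩ ⟨t, h.2⟩ else 0
    with hC'def
  set D' : ℕ → ℕ → ℕ := fun s t => if h : s < n ∧ t < n then D ⟨s, h.1⟩ ⟨t, h.2⟩ else 0
    with hD'def
  -- entries nonnegative, from 1×1 minors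
  have h0 : ∀ s t, s < n → t < n → 0 ≤ A' s t := by
    intro s t hs ht
    have hsm : ∀ x : Fin n, StrictMono (fun _ : Fin 1 => x) := by
      intro x a b hab
      have := a.isLt
      have := b.isLt
      have := Fin.lt_def.mp hab
      omega
    have hdet := hA 1 (fun _ => ⟨s, hs⟩) (fun _ => ⟨t, ht⟩) (hsm _) (hsm _)
    rw [Matrix.det_fin_one] at hdet
    simp only [Matrix.submatrix_apply] at hdet
    simp only [hA'def]
    rw [dif_pos ⟨hs, ht⟩]
    exact hdet
  -- the 2×2 minor inequality
  have h2 : ∀ a a' b b', a < a' → a' < n → b < b' → b' < n →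
      A' a b' * A' a' b ≤ A' a b * A' a' b' := by
    intro a a' b b' haa ha'n hbb hb'n
    have han : a < n := by omega
    have hbn : b < n := by omega
    set f : Fin 2 → Fin n := ![⟨a, han⟩, ⟨a', ha'n⟩] with hfdef
    set g : Fin 2 → Fin n := ![⟨b, hbn⟩, ⟨b', hb'n⟩] with hgdef
    have hf : StrictMono f := by
      intro x y hxy
      fin_cases x <;> fin_cases y <;>
        first
        | exact absurd hxy (by decide)
        | (simp [hfdef, Fin.lt_def]; omega)
    have hg : StrictMono g := by
      intro x y hxy
      fin_cases x <;> fin_cases y <;>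
        first
        | exact absurd hxy (by decide)
        | (simp [hgdef, Fin.lt_def]; omega)
    have hdet := hA 2 f g hf hg
    rw [Matrix.det_fin_two] at hdet
    simp only [Matrix.submatrix_apply, hfdef, hgdef] at hdet
    simp only [Matrix.cons_val_zero, Matrix.cons_val_one, Matrix.head_cons] at hdet
    simp only [hA'def]
    rw [dif_pos ⟨han, hb'n⟩, dif_pos ⟨ha'n, hbn⟩, dif_pos ⟨han, hbn⟩, dif_pos ⟨ha'n, hb'n⟩]
    linarith
  -- margins
  have hrow' : ∀ s < n, ∑ t ∈ range n, C' s t = ∑ t ∈ range n, D' s t := by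
    intro s hs
    have h1 := fin_row_sum C ⟨s, hs⟩
    have h2 := fin_row_sum D ⟨s, hs⟩
    simp only at h1 h2
    rw [← h1, ← h2]
    exact hrow ⟨s, hs⟩
  have hcol' : ∀ t < n, ∑ s ∈ range n, C' s t = ∑ s ∈ range n, D' s t := by
    intro t ht
    have h1 := fin_col_sum C ⟨t, ht⟩
    have h2 := fin_col_sum D ⟨t, ht⟩
    simp only at h1 h2
    rw [← h1, ← h2]
    exact hcol ⟨t, ht⟩
  -- dominance
  have hdom : ∀ i ≤ n, ∀ j ≤ n, SS D' i j ≤ SS C' i j := by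
    intro i hi j hj
    match i, j with
    | 0, j => simp [SS]
    | (p+1), 0 => simp [SS]
    | (p+1), (q+1) =>
      have hp : p < n := by omega
      have hq : q < n := by omega
      have e1 := cstar_eq_SS C ⟨p, hp⟩ ⟨q, hq⟩
      have e2 := cstar_eq_SS D ⟨p, hp⟩ ⟨q, hq⟩
      simp only at e1 e2
      rw [← e1, ← e2]
      exact hcs _ _
  rw [fin_prod_eq_PP A D, fin_prod_eq_PP A C]
  exact natmain h0 h2 (gap n C' D') D' hrow' hcol' hdom le_rfl


end TNAux

theorem stmt2 (n : ℕ) (C D : Matrix (Fin n) (Fin n) ℕ)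
    (hrow : ∀ i, ∑ j, C i j = ∑ j, D i j)
    (hcol : ∀ j, ∑ i, C i j = ∑ i, D i j) :
    (∀ A : Matrix (Fin n) (Fin n) ℝ, TotallyNonneg A →
      (∏ i, ∏ j, A i j ^ D i j) ≤ ∏ i, ∏ j, A i j ^ C i j) ↔
    (∀ i j, cstar D i j ≤ cstar C i j) := by
  constructor
  · exact TNAux.forward C D
  · intro hcs A hA
    exact TNAux.backward C D hrow hcol hcs A hA
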